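/- Let γ > 0 and α ∈ (0,1]. Then for every continuously differentiable function v : [0,1] → ℝ, α · v(α)² ≤ 2(2γ+1) · ∫₀^α (x/α)^{2γ} v(x)² dx + (1/(γ+1)) · ∫₀^α α² v′(x)² dx. -/

import Mathlib

open MeasureTheory Set

lemma ptwise (γ α x a b : ℝ) (hγ : 0 < γ) (hα0 : 0 < α) (hα1 : α ≤ 1)
    (hx0 : 0 ≤ x) (hxα : x ≤ α) :
    ((2*γ+1) * x ^ (2*γ) * a^2 + x ^ (2*γ+1) * (2 * a * b)) / α ^ (2*γ)
      ≤ 2 * (2*γ+1) * ((x/α) ^ (2*γ) * a^2) + (1/(γ+1)) * (α^2 * b^2) := by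
  have hs0 : (0:ℝ) ≤ x ^ (2*γ) := Real.rpow_nonneg hx0 _
  have hsα : x ^ (2*γ) ≤ α ^ (2*γ) := Real.rpow_le_rpow hx0 hxα (by positivity)
  have hαp : (0:ℝ) < α ^ (2*γ) := Real.rpow_pos_of_pos hα0 _
  have hsplit : x ^ (2*γ+1) = x ^ (2*γ) * x := by
    rw [Real.rpow_add' hx0 (by positivity), Real.rpow_one]
  have hdiv : (x/α) ^ (2*γ) = x ^ (2*γ) / α ^ (2*γ) :=
    Real.div_rpow hx0 hα0.le (2*γ)
  rw [hsplit, hdiv, div_le_iff₀ hαp]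
  set s : ℝ := x ^ (2*γ) with hs
  set t : ℝ := α ^ (2*γ) with ht
  have hγ1 : (0:ℝ) < γ + 1 := by linarith
  have hγ2 : (0:ℝ) < 2*γ + 1 := by linarith
  have key : s * x * (2 * a * b) * (2*γ+1) ≤ (2*γ+1)^2 * s * a^2 + s * x^2 * b^2 := by
    nlinarith [sq_nonneg ((2*γ+1) * a - x * b), hs0, sq_nonneg a, sq_nonneg b]
  have hx2 : x^2 ≤ α^2 := by nlinarith
  have hst : s * x^2 ≤ t * α^2 := by nlinarith [sq_nonneg x, sq_nonneg α]
  set w : ℝ := t * α^2 * b^2 / (γ+1) with hwdef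
  have hw : w * (γ+1) = t * α^2 * b^2 := div_mul_cancel₀ _ (ne_of_gt hγ1)
  have expand : (2 * (2*γ+1) * (s / t * a^2) + 1/(γ+1) * (α^2 * b^2)) * t
      = 2 * (2*γ+1) * s * a^2 + w := by
    rw [hwdef]; field_simp
  rw [expand]
  have h2 : s * x^2 * b^2 ≤ (2*γ+1) * w := by
    rw [hwdef, show (2*γ+1) * (t*α^2*b^2/(γ+1)) = ((2*γ+1)*(t*α^2*b^2))/(γ+1) by ring, le_div_iff₀ hγ1]
    nlinarith [mul_nonneg (sub_nonneg.2 hst) (sq_nonneg b),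
      mul_nonneg (mul_nonneg hαp.le (sq_nonneg α)) (sq_nonneg b), hγ.le, hγ1]
  have h3 : s * x * (2*a*b) ≤ (2*γ+1) * s * a^2 + w := by
    have h4 : s*x*(2*a*b)*(2*γ+1) ≤ ((2*γ+1)*s*a^2 + w)*(2*γ+1) := by nlinarith [key, h2]
    exact le_of_mul_le_mul_right h4 hγ2
  linarith

/-- Second step of the eigenvalue lower bound: for `γ > 0` and `α ∈ (0,1]`,
`α v(α)² ≤ 2(2γ+1) ∫₀^α (x/α)^(2γ) v² + (1/(γ+1)) ∫₀^α α² v'²` for C¹ functions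
`v` on `[0,1]`. -/
theorem eigenvalue_lower_bound_second_step
    (γ α : ℝ) (hγ : 0 < γ) (hα : α ∈ Set.Ioc (0 : ℝ) 1)
    (v v' : ℝ → ℝ)
    (hv : ∀ x ∈ Set.Icc (0 : ℝ) 1, HasDerivWithinAt v (v' x) (Set.Icc (0 : ℝ) 1) x)
    (hv' : ContinuousOn v' (Set.Icc (0 : ℝ) 1)) :
    α * (v α) ^ 2
      ≤ 2 * (2 * γ + 1) * (∫ x in Set.Ioo (0 : ℝ) α, (x / α) ^ (2 * γ) * (v x) ^ 2)
        + (1 / (γ + 1)) * ∫ x in Set.Ioo (0 : ℝ) α, α ^ 2 * (v' x) ^ 2 := by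
  obtain ⟨hα0, hα1⟩ := hα
  have hγ2 : (0:ℝ) < 2*γ := by linarith
  have hαp : (0:ℝ) < α ^ (2*γ) := Real.rpow_pos_of_pos hα0 _
  set F : ℝ → ℝ := fun x => x ^ (2*γ+1) * (v x)^2 / α ^ (2*γ) with hF
  set F' : ℝ → ℝ := fun x =>
    ((2*γ+1) * x ^ (2*γ) * (v x)^2 + x ^ (2*γ+1) * (2 * v x * v' x)) / α ^ (2*γ) with hF'
  have hvc : ContinuousOn v (Icc (0:ℝ) 1) := fun x hx => (hv x hx).continuousWithinAt
  have hsub : Icc (0:ℝ) α ⊆ Icc (0:ℝ) 1 := Icc_subset_Icc le_rfl hα1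
  have hvc' : ContinuousOn v (Icc (0:ℝ) α) := hvc.mono hsub
  have hv'c : ContinuousOn v' (Icc (0:ℝ) α) := hv'.mono hsub
  have hrpow1 : Continuous (fun x : ℝ => x ^ (2*γ+1)) := Real.continuous_rpow_const (by linarith)
  have hrpow : Continuous (fun x : ℝ => x ^ (2*γ)) := Real.continuous_rpow_const (by linarith)
  have hF'c : ContinuousOn F' (Icc (0:ℝ) α) := by
    apply ContinuousOn.div_const
    exact (((continuous_const.mul hrpow).continuousOn.mul (hvc'.pow 2)).add
      (hrpow1.continuousOn.mul ((continuous_const.continuousOn.mul hvc').mul hv'c)))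
  -- FTC
  have hderiv : ∀ x ∈ Ioo (0:ℝ) α, HasDerivWithinAt F (F' x) (Ioi x) x := by
    intro x hx
    have hx1 : x ∈ Icc (0:ℝ) 1 := ⟨hx.1.le, hx.2.le.trans hα1⟩
    have hmem : Icc (0:ℝ) 1 ∈ nhds x := Icc_mem_nhds hx.1 (lt_of_lt_of_le hx.2 hα1)
    have hvd : HasDerivAt v (v' x) x := (hv x hx1).hasDerivAt hmem
    have hr : HasDerivAt (fun y : ℝ => y ^ (2*γ+1)) ((2*γ+1) * x ^ (2*γ)) x := by
      have := Real.hasDerivAt_rpow_const (x := x) (p := 2*γ+1) (Or.inr (by linarith))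
      convert this using 2
      norm_num
    have hsq : HasDerivAt (fun y => (v y)^2) (2 * v x * v' x) x := by
      simpa using hvd.fun_pow 2
    have := ((hr.fun_mul hsq).div_const (α ^ (2*γ)))
    refine HasDerivAt.hasDerivWithinAt ?_
    convert this using 1
  have hcont : ContinuousOn F (Icc (0:ℝ) α) :=
    (hrpow1.continuousOn.mul (hvc'.pow 2)).div_const _
  have hint : IntervalIntegrable F' volume 0 α := by
    apply ContinuousOn.intervalIntegrable
    rwa [uIcc_of_le hα0.le]
  have ftc : ∫ x in (0:ℝ)..α, F' x = F α - F 0 :=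
    intervalIntegral.integral_eq_sub_of_hasDeriv_right_of_le hα0.le hcont hderiv hint
  have hF0 : F 0 = 0 := by
    simp only [hF]
    rw [Real.zero_rpow (by positivity)]
    simp
  have hFα : F α = α * (v α)^2 := by
    simp only [hF]
    rw [Real.rpow_add hα0, Real.rpow_one]
    field_simp
  have hval : α * (v α)^2 = ∫ x in Ioo (0:ℝ) α, F' x := by
    rw [← MeasureTheory.integral_Ioc_eq_integral_Ioo, ← intervalIntegral.integral_of_le hα0.le,
      ftc, hF0, hFα, sub_zero]
  rw [hval]
  -- integrability of the pieces
  have hG1c : ContinuousOn (fun x => (x/α) ^ (2*γ) * (v x)^2) (Icc (0:ℝ) α) :=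
    ((hrpow.comp (continuous_id.div_const α)).continuousOn.mul (hvc'.pow 2))
  have hG2c : ContinuousOn (fun x => α^2 * (v' x)^2) (Icc (0:ℝ) α) :=
    continuous_const.continuousOn.mul (hv'c.pow 2)
  have hi1 : IntegrableOn (fun x => (x/α) ^ (2*γ) * (v x)^2) (Ioo (0:ℝ) α) :=
    (hG1c.integrableOn_Icc).mono_set Ioo_subset_Icc_self
  have hi2 : IntegrableOn (fun x => α^2 * (v' x)^2) (Ioo (0:ℝ) α) :=
    (hG2c.integrableOn_Icc).mono_set Ioo_subset_Icc_self
  have hiF' : IntegrableOn F' (Ioo (0:ℝ) α) :=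
    (hF'c.integrableOn_Icc).mono_set Ioo_subset_Icc_self
  have hmono : ∫ x in Ioo (0:ℝ) α, F' x
      ≤ ∫ x in Ioo (0:ℝ) α,
        (2 * (2*γ+1) * ((x/α) ^ (2*γ) * (v x)^2) + (1/(γ+1)) * (α^2 * (v' x)^2)) := by
    apply setIntegral_mono_on hiF' ((hi1.const_mul _).add (hi2.const_mul _)) measurableSet_Ioo
    intro x hx
    exact ptwise γ α x (v x) (v' x) hγ hα0 hα1 hx.1.le hx.2.le
  refine hmono.trans_eq ?_
  rw [MeasureTheory.integral_add (hi1.const_mul _) (hi2.const_mul _),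
    integral_const_mul, integral_const_mul]
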